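/- For every natural number k ≥ 2 and every permutation σ of Fin k that is a single k-cycle (σ is a cycle whose support is all of Fin k), the number of inversions of σ, i.e. the cardinality of {(i, j) : Fin k × Fin k | i < j ∧ σ j < σ i}, is at least k − 1. -/

import Mathlib

open Equiv Finset

lemma no_invariant_set (k : ℕ) (σ : Equiv.Perm (Fin k))
    (hcycle : σ.IsCycle) (hsupp : σ.support = Finset.univ)
    (S : Finset (Fin k)) (hne : S.Nonempty) (hproper : S ≠ Finset.univ)
    (hinv : ∀ x ∈ S, σ x ∈ S) : False := by
  obtain ⟨x, hx⟩ := hne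
  obtain ⟨y, hy⟩ : ∃ y, y ∉ S := by
    by_contra h
    push_neg at h
    exact hproper (Finset.eq_univ_of_forall h)
  have hxm : σ x ≠ x := by
    have := Finset.mem_univ x
    rw [← hsupp, Equiv.Perm.mem_support] at this
    exact this
  have hym : σ y ≠ y := by
    have := Finset.mem_univ y
    rw [← hsupp, Equiv.Perm.mem_support] at this
    exact this
  obtain ⟨n, hn⟩ := hcycle.exists_pow_eq hxm hym
  have : ∀ m : ℕ, (σ ^ m) x ∈ S := by
    intro m
    induction m with
    | zero => simpa using hx
    | succ m ih => rw [pow_succ', Equiv.Perm.mul_apply]; exact hinv _ ih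
  exact hy (hn ▸ this n)

theorem kcycle_inversions_lower_bound
    (k : ℕ) (hk : 2 ≤ k) (σ : Equiv.Perm (Fin k))
    (hcycle : σ.IsCycle) (hsupp : σ.support = Finset.univ) :
    k - 1 ≤ {p : Fin k × Fin k | p.1 < p.2 ∧ σ p.2 < σ p.1}.ncard := by
  classical
  have hk0 : 0 < k := by omega
  set A : ℕ → Finset (Fin k) :=
    fun i => Finset.univ.filter (fun x : Fin k => x.val ≤ i ∧ i < (σ x).val) with hA
  set B : ℕ → Finset (Fin k) :=
    fun i => Finset.univ.filter (fun x : Fin k => i < x.val ∧ (σ x).val ≤ i) with hB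
  have hAne : ∀ i, i < k - 1 → (A i).Nonempty := by
    intro i hi
    by_contra hne
    rw [Finset.not_nonempty_iff_eq_empty, hA, Finset.filter_eq_empty_iff] at hne
    refine no_invariant_set k σ hcycle hsupp
      (Finset.univ.filter (fun x : Fin k => x.val ≤ i)) ⟨⟨0, hk0⟩, by simp⟩ ?_ ?_
    · intro h
      have hm := Finset.mem_filter.mp (h ▸ Finset.mem_univ (⟨k-1, by omega⟩ : Fin k))
      simp only [Finset.mem_univ, true_and] at hm
      omega
    · intro x hx
      have hx' := (Finset.mem_filter.mp hx).2
      have := hne (Finset.mem_univ x)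
      simp only [Finset.mem_filter, Finset.mem_univ, true_and, not_and, not_lt] at this ⊢
      exact this hx'
  have hBne : ∀ i, i < k - 1 → (B i).Nonempty := by
    intro i hi
    by_contra hne
    rw [Finset.not_nonempty_iff_eq_empty, hB, Finset.filter_eq_empty_iff] at hne
    refine no_invariant_set k σ hcycle hsupp
      (Finset.univ.filter (fun x : Fin k => i < x.val)) ⟨⟨k-1, by omega⟩, ?_⟩ ?_ ?_
    · simp only [Finset.mem_filter, Finset.mem_univ, true_and]; omega
    · intro h
      have hm := Finset.mem_filter.mp (h ▸ Finset.mem_univ (⟨0, hk0⟩ : Fin k))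
      simp only [Finset.mem_univ, true_and] at hm
      omega
    · intro x hx
      have hx' := (Finset.mem_filter.mp hx).2
      have := hne (Finset.mem_univ x)
      simp only [Finset.mem_filter, Finset.mem_univ, true_and, not_and, not_le] at this ⊢
      exact this hx'
  set f : ℕ → Fin k × Fin k := fun i =>
    if h : i < k - 1 then ((A i).max' (hAne i h), (B i).min' (hBne i h)) else (⟨0, hk0⟩, ⟨0, hk0⟩)
    with hf
  have hmemA : ∀ i (h : i < k - 1), ((A i).max' (hAne i h)).val ≤ i ∧ i < (σ ((A i).max' (hAne i h))).val := by
    intro i h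
    have := (A i).max'_mem (hAne i h)
    simpa [hA] using this
  have hmemB : ∀ i (h : i < k - 1), i < ((B i).min' (hBne i h)).val ∧ (σ ((B i).min' (hBne i h))).val ≤ i := by
    intro i h
    have := (B i).min'_mem (hBne i h)
    simpa [hB] using this
  -- main injectivity auxiliary
  have key : ∀ i i', i < k - 1 → i' < k - 1 → i < i' → f i = f i' → False := by
    intro i i' hi hi' hlt hfe
    rw [hf] at hfe
    simp only [dif_pos hi, dif_pos hi', Prod.mk.injEq] at hfe
    obtain ⟨hmax, hmin⟩ := hfe
    refine no_invariant_set k σ hcycle hsupp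
      (Finset.univ.filter (fun x : Fin k => i < x.val ∧ x.val ≤ i')) ⟨⟨i', by omega⟩, ?_⟩ ?_ ?_
    · simp only [Finset.mem_filter, Finset.mem_univ, true_and]
      exact ⟨hlt, le_refl i'⟩
    · intro h
      have hm := Finset.mem_filter.mp (h ▸ Finset.mem_univ (⟨0, hk0⟩ : Fin k))
      simp only [Finset.mem_univ, true_and] at hm
      omega
    · intro x hx
      simp only [Finset.mem_filter, Finset.mem_univ, true_and] at hx ⊢
      obtain ⟨hx1, hx2⟩ := hx
      constructor
      · -- i < σ x : else x ∈ B i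
        by_contra hc
        push_neg at hc
        have hxB : x ∈ B i := by
          simp only [hB, Finset.mem_filter, Finset.mem_univ, true_and]
          exact ⟨hx1, hc⟩
        have h1 : (B i).min' (hBne i hi) ≤ x := Finset.min'_le _ _ hxB
        have h2 : i' < ((B i).min' (hBne i hi)).val := by
          rw [hmin]; exact (hmemB i' hi').1
        rw [Fin.le_def] at h1
        omega
      · -- σ x ≤ i' : else x ∈ A i'
        by_contra hc
        push_neg at hc
        have hxA : x ∈ A i' := by
          simp only [hA, Finset.mem_filter, Finset.mem_univ, true_and]
          exact ⟨hx2, hc⟩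
        have h1 : x ≤ (A i').max' (hAne i' hi') := Finset.le_max' _ _ hxA
        have h2 : ((A i').max' (hAne i' hi')).val ≤ i := by
          rw [← hmax]; exact (hmemA i hi).1
        rw [Fin.le_def] at h1
        omega
  -- now count
  have hfin : {p : Fin k × Fin k | p.1 < p.2 ∧ σ p.2 < σ p.1}.ncard
      = {p : Fin k × Fin k | p.1 < p.2 ∧ σ p.2 < σ p.1}.toFinset.card :=
    Set.ncard_eq_toFinset_card' _
  rw [hfin]
  have := Finset.card_le_card_of_injOn f
    (s := Finset.range (k-1))
    (t := {p : Fin k × Fin k | p.1 < p.2 ∧ σ p.2 < σ p.1}.toFinset)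
    (fun i hi => by
      rw [Finset.mem_coe, Finset.mem_range] at hi
      rw [Finset.mem_coe, Set.mem_toFinset]
      rw [hf]
      simp only [dif_pos hi]
      obtain ⟨ha1, ha2⟩ := hmemA i hi
      obtain ⟨hb1, hb2⟩ := hmemB i hi
      exact ⟨Fin.lt_def.mpr (lt_of_le_of_lt ha1 hb1), Fin.lt_def.mpr (lt_of_le_of_lt hb2 ha2)⟩)
    (by
      intro i hi i' hi' hfe
      rw [Finset.mem_coe, Finset.mem_range] at hi hi'
      rcases lt_trichotomy i i' with h | h | h
      · exact absurd hfe (fun hfe => key i i' hi hi' h hfe)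
      · exact h
      · exact absurd hfe.symm (fun hfe => key i' i hi' hi h hfe))
  rwa [Finset.card_range] at this
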